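/- In the polynomial ring Q[x₁,...,x_r, y₁,...,y_s] with deg(x_i) = deg(y_i) = 2i, the homogeneous graded components (in each positive degree) of the element (1 + x₁ + ⋯ + x_r)(1 + y₁ + ⋯ + y_s) − 1 form a regular sequence. -/

import Mathlib

universe u v


/-- Auxiliary predicate: each element of the list is a non-zero-divisor modulo `I`
together with the preceding elements. -/
def IsRegularSeqAux (R : Type u) [CommRing R] : Ideal R → List R → Prop
  | _, [] => True
  | I, a :: l => (∀ x : R, a * x ∈ I → x ∈ I) ∧ IsRegularSeqAux R (I ⊔ Ideal.span {a}) l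

/-- A sequence `a₁, …, a_m` is regular if each `a_i` is a non-zero-divisor modulo the
ideal generated by the preceding elements. -/
def IsRegularSequence (R : Type u) [CommRing R] (l : List R) : Prop :=
  IsRegularSeqAux R ⊥ l
open MvPolynomial

/-- `xe r s i` is the variable `x_i` (for `1 ≤ i ≤ r`), `1` for `i = 0`, and `0` otherwise. -/
noncomputable def xe (r s : ℕ) (i : ℕ) : MvPolynomial (Fin r ⊕ Fin s) ℚ :=
  if h0 : i = 0 then 1 else if h : i ≤ r then X (Sum.inl ⟨i - 1, by omega⟩) else 0

/-- `ye r s j` is the variable `y_j` (for `1 ≤ j ≤ s`), `1` for `j = 0`, and `0` otherwise. -/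
noncomputable def ye (r s : ℕ) (j : ℕ) : MvPolynomial (Fin r ⊕ Fin s) ℚ :=
  if h0 : j = 0 then 1 else if h : j ≤ s then X (Sum.inr ⟨j - 1, by omega⟩) else 0

/-- With the weighted grading `deg xᵢ = deg yᵢ = 2i`, `homComponent r s k` is the homogeneous
component of degree `2k` of `(1 + x₁ + ⋯ + x_r)(1 + y₁ + ⋯ + y_s) − 1`, namely
`Σ_{i+j=k} xᵢ yⱼ` (with `x₀ = y₀ = 1`). -/
noncomputable def homComponent (r s : ℕ) (k : ℕ) : MvPolynomial (Fin r ⊕ Fin s) ℚ :=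
  ∑ i ∈ Finset.range (k + 1), xe r s i * ye r s (k - i)

open MvPolynomial


section Transfer

variable {R : Type u} {S : Type v} [CommRing R] [CommRing S]
variable (φ : R →+* S) (d : ℕ) (b : ℕ → S)

/-- characterization of `I.map φ` when `S` has a generating family `b` over `R`. -/
lemma mem_map_iff_rep
    (hex : ∀ z : S, ∃ c : ℕ → R, z = ∑ k ∈ Finset.range d, φ (c k) * b k)
    (I : Ideal R) (z : S) :
    z ∈ I.map φ ↔
      ∃ c : ℕ → R, (∀ k ∈ Finset.range d, c k ∈ I) ∧
        z = ∑ k ∈ Finset.range d, φ (c k) * b k := by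
  constructor
  · intro hz
    refine Submodule.span_induction ?_ ?_ ?_ ?_ hz
    · rintro x ⟨i, hi, rfl⟩
      obtain ⟨e, he⟩ := hex 1
      refine ⟨fun k => i * e k, fun k _ => I.mul_mem_right _ hi, ?_⟩
      calc φ i = φ i * 1 := by ring
      _ = _ := by rw [he, Finset.mul_sum]; simp [map_mul, mul_assoc]
    · exact ⟨0, by simp, by simp⟩
    · rintro x y - - ⟨c, hc, rfl⟩ ⟨c', hc', rfl⟩
      exact ⟨fun k => c k + c' k, fun k hk => I.add_mem (hc k hk) (hc' k hk),
        by rw [← Finset.sum_add_distrib]; simp [map_add, add_mul]⟩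
    · rintro s x - ⟨c, hc, rfl⟩
      have hrep : ∀ k, ∃ e : ℕ → R, s * b k = ∑ m ∈ Finset.range d, φ (e m) * b m :=
        fun k => hex (s * b k)
      choose e he using hrep
      refine ⟨fun m => ∑ k ∈ Finset.range d, c k * e k m,
        fun m _ => Ideal.sum_mem _ fun k hk => I.mul_mem_right _ (hc k hk), ?_⟩
      have : s • ∑ k ∈ Finset.range d, φ (c k) * b k
          = ∑ k ∈ Finset.range d, φ (c k) * (s * b k) := by
        rw [smul_eq_mul, Finset.mul_sum]; congr 1; ext k; ring
      rw [this]
      rw [Finset.sum_congr rfl fun k _ => by rw [he k, Finset.mul_sum]]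
      rw [Finset.sum_comm]
      congr 1; ext m
      rw [map_sum, Finset.sum_mul]
      congr 1; ext k
      rw [map_mul]; ring
  · rintro ⟨c, hc, rfl⟩
    exact Ideal.sum_mem _ fun k hk =>
      Ideal.mul_mem_right _ _ (Ideal.mem_map_of_mem φ (hc k hk))


lemma regSeqAux_map_iff
    (hex : ∀ z : S, ∃ c : ℕ → R, z = ∑ k ∈ Finset.range d, φ (c k) * b k)
    (hli : ∀ c : ℕ → R, (∑ k ∈ Finset.range d, φ (c k) * b k) = 0 →
      ∀ k ∈ Finset.range d, c k = 0)
    (hb0 : b 0 = 1) (hd : 0 < d) :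
    ∀ (l : List R) (I : Ideal R),
      IsRegularSeqAux R I l ↔ IsRegularSeqAux S (I.map φ) (l.map φ) := by
  intro l
  induction l with
  | nil => intro I; simp [IsRegularSeqAux]
  | cons a l ih =>
    intro I
    have hspan : (I.map φ) ⊔ Ideal.span {φ a} = (I ⊔ Ideal.span {a}).map φ := by
      rw [Ideal.map_sup, Ideal.map_span, Set.image_singleton]
    constructor
    · rintro ⟨h1, h2⟩
      refine ⟨?_, by rw [hspan]; exact (ih _).1 h2⟩
      intro z hz
      obtain ⟨c, hc⟩ := hex z
      rw [hc, Finset.mul_sum] at hz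
      have hz' : (∑ k ∈ Finset.range d, φ ((a * c k)) * b k) ∈ I.map φ := by
        convert hz using 2 with k
        rw [map_mul]; ring
      rw [mem_map_iff_rep φ d b hex] at hz'
      obtain ⟨c', hc', heq⟩ := hz'
      have h0 : (∑ k ∈ Finset.range d, φ ((fun k => a * c k - c' k) k) * b k) = 0 := by
        simp only [map_sub, sub_mul, Finset.sum_sub_distrib]
        rw [← heq]; ring
      have := hli _ h0
      rw [mem_map_iff_rep φ d b hex]
      refine ⟨c, fun k hk => ?_, hc⟩
      have : a * c k - c' k = 0 := this k hk
      have : a * c k ∈ I := by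
        have := hc' k hk; rwa [show a * c k = c' k by linear_combination ‹a * c k - c' k = 0›]
      exact h1 _ this
    · rintro ⟨h1, h2⟩
      refine ⟨?_, (ih _).2 (by rw [← hspan]; exact h2)⟩
      intro x hx
      have : φ a * φ x ∈ I.map φ := by
        rw [← map_mul]; exact Ideal.mem_map_of_mem φ hx
      have hfx := h1 _ this
      rw [mem_map_iff_rep φ d b hex] at hfx
      obtain ⟨c', hc', heq⟩ := hfx
      have h0 : (∑ k ∈ Finset.range d,
          φ ((fun k => (if k = 0 then x else 0) - c' k) k) * b k) = 0 := by
        simp only [map_sub, sub_mul, Finset.sum_sub_distrib]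
        rw [← heq]
        rw [Finset.sum_eq_single 0]
        · simp [hb0]
        · intro k _ hk; simp [hk]
        · intro h; exact absurd (Finset.mem_range.2 hd) h
      have h00 := hli _ h0 0 (Finset.mem_range.2 hd)
      rw [if_pos rfl] at h00
      have : x = c' 0 := by linear_combination h00
      rw [this]; exact hc' 0 (Finset.mem_range.2 hd)

end Transfer

section Base

variable {σ : Type*} {A : Type*} [CommRing A]

lemma regSeqAux_vars (T : Set σ) (l : List σ)
    (hdis : ∀ i ∈ l, i ∉ T) (hnd : l.Nodup) :
    IsRegularSeqAux (MvPolynomial σ A) (Ideal.span (X '' T)) (l.map X) := by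
  induction l generalizing T with
  | nil => trivial
  | cons a l ih =>
    have ha : a ∉ T := hdis a List.mem_cons_self
    constructor
    · intro f hf
      rw [mem_ideal_span_X_image] at hf ⊢
      intro m hm
      have hm' : m + Finsupp.single a 1 ∈ (f * X a).support := by
        classical
        rw [support_mul_X]
        exact Finset.mem_map.2 ⟨m, hm, rfl⟩
      have hm'' : m + Finsupp.single a 1 ∈ (X a * f).support := by rwa [mul_comm]
      obtain ⟨i, hiT, hine⟩ := hf _ hm''
      refine ⟨i, hiT, ?_⟩
      have hia : i ≠ a := fun h => ha (h ▸ hiT)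
      simpa [Finsupp.single_apply, hia.symm] using hine
    · have hsp : Ideal.span (X '' T : Set (MvPolynomial σ A)) ⊔ Ideal.span {X a}
          = Ideal.span (X '' (insert a T)) := by
        rw [Set.image_insert_eq, Ideal.span_insert]
        rw [sup_comm]
      rw [hsp]
      have hnd' := List.nodup_cons.1 hnd
      exact ih _ (fun i hi hmem => by
        rcases Set.mem_insert_iff.1 hmem with h | h
        · subst h; exact hnd'.1 hi
        · exact hdis i (List.mem_cons_of_mem a hi) h) hnd'.2

end Base

section Esymm

lemma Multiset.esymm_cons' {R : Type*} [CommRing R] (a : R) (s : Multiset R) (k : ℕ) :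
    (a ::ₘ s).esymm (k + 1) = s.esymm (k + 1) + a * s.esymm k := by
  unfold Multiset.esymm
  rw [Multiset.powersetCard_cons, Multiset.map_add, Multiset.sum_add, Multiset.map_map]
  congr 1
  rw [show ((fun t : Multiset R => t.prod) ∘ (Multiset.cons a)) = fun t => a * t.prod from
    funext fun t => Multiset.prod_cons a t]
  rw [Multiset.sum_map_mul_left]

variable {S : Type v} [CommRing S] [Algebra ℚ S]

/-- the `k`-th elementary symmetric expression in the family of elements `v`. -/
noncomputable def esymmAt {n : ℕ} (v : Fin n → S) (k : ℕ) : S :=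
  aeval v (MvPolynomial.esymm (Fin n) ℚ k)

lemma esymmAt_multiset {n : ℕ} (v : Fin n → S) (k : ℕ) :
    esymmAt v k = (Finset.univ.val.map v).esymm k :=
  aeval_esymm_eq_multiset_esymm _ _ _ _

@[simp] lemma esymmAt_zero {n : ℕ} (v : Fin n → S) : esymmAt v 0 = 1 := by
  simp [esymmAt]

lemma esymmAt_of_lt {n : ℕ} (v : Fin n → S) {k : ℕ} (h : n < k) : esymmAt v k = 0 := by
  rw [esymmAt_multiset, Multiset.esymm, Multiset.powersetCard_eq_empty _ (by simpa using h)]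
  simp

lemma esymmAt_perm {n : ℕ} (v : Fin n → S) (e : Equiv.Perm (Fin n)) (k : ℕ) :
    esymmAt (v ∘ e) k = esymmAt v k := by
  unfold esymmAt
  rw [← aeval_rename, esymm_isSymmetric _ _ _ e]

lemma esymmAt_succ {n : ℕ} (v : Fin (n + 1) → S) (k : ℕ) :
    esymmAt v (k + 1) = esymmAt (v ∘ Fin.castSucc) (k + 1)
      + v (Fin.last n) * esymmAt (v ∘ Fin.castSucc) k := by
  have hnm : Fin.last n ∉ (Finset.univ.map Fin.castSuccEmb : Finset (Fin (n + 1))) := by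
    simp only [Finset.mem_map, Finset.mem_univ, true_and]
    rintro ⟨i, hi⟩
    have := congrArg Fin.val hi
    simp [Fin.castSuccEmb] at this
    omega
  have hms : (Finset.univ.val.map v : Multiset S)
      = v (Fin.last n) ::ₘ (Finset.univ.val.map (v ∘ Fin.castSucc)) := by
    rw [Fin.univ_castSuccEmb, Finset.cons_val, Multiset.map_cons, Finset.map_val,
      Multiset.map_map]
    rfl
  rw [esymmAt_multiset, esymmAt_multiset, esymmAt_multiset, hms, Multiset.esymm_cons']

end Esymm

section Vand

lemma coeffs_eq_zero_of_roots {D : Type*} [CommRing D] [IsDomain D]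
    {n : ℕ} (v : Fin n → D) (hv : Function.Injective v) (c : ℕ → D)
    (h : ∀ p, ∑ k ∈ Finset.range n, c k * v p ^ k = 0) :
    ∀ k ∈ Finset.range n, c k = 0 := by
  classical
  let K := FractionRing D
  let f : D →+* K := algebraMap D K
  have hf : Function.Injective f := IsFractionRing.injective D K
  set P : Polynomial K := ∑ k ∈ Finset.range n, Polynomial.C (f (c k)) * Polynomial.X ^ k with hP
  have hcoeff : ∀ k < n, P.coeff k = f (c k) := by
    intro k hk
    rw [hP, Polynomial.finset_sum_coeff]
    rw [Finset.sum_eq_single k]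
    · simp
    · intro j _ hj
      rw [Polynomial.coeff_C_mul, Polynomial.coeff_X_pow, if_neg (fun h => hj h.symm), mul_zero]
    · intro hk'; exact absurd (Finset.mem_range.2 hk) hk'
  have heval : ∀ p : Fin n, P.eval (f (v p)) = 0 := by
    intro p
    rw [hP]
    simp only [Polynomial.eval_finset_sum, Polynomial.eval_mul, Polynomial.eval_C,
      Polynomial.eval_pow, Polynomial.eval_X]
    rw [← map_zero f, ← h p, map_sum]
    simp [map_mul, map_pow]
  have hP0 : P = 0 := by
    rcases eq_or_ne P 0 with h0 | h0
    · exact h0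
    · refine Polynomial.eq_zero_of_natDegree_lt_card_of_eval_eq_zero P
        (f := fun p : Fin n => f (v p)) (hf.comp hv) heval ?_
      rw [Fintype.card_fin]
      have : P.degree < n := by
        refine lt_of_le_of_lt (Polynomial.degree_sum_le _ _) ?_
        rw [Finset.sup_lt_iff (by exact_mod_cast WithBot.bot_lt_coe n)]
        intro k hk
        refine lt_of_le_of_lt (Polynomial.degree_C_mul_X_pow_le _ _) ?_
        exact_mod_cast Finset.mem_range.1 hk
      exact (Polynomial.natDegree_lt_iff_degree_lt h0).2 this
  intro k hk
  have := hcoeff k (Finset.mem_range.1 hk)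
  rw [hP0] at this
  apply hf
  rw [← this]
  simp

end Vand

section Step

open MvPolynomial

variable (r s : ℕ)

/-- the truncated y-variables inside `ℚ[x₁..x_r, y₁..y_s, u]` (where `u` is the last
`inr`-variable): `yp r s 0 = 1`, `yp r s j = y_j` for `1 ≤ j ≤ s`, and `0` otherwise. -/
noncomputable def yp (j : ℕ) : MvPolynomial (Fin r ⊕ Fin (s + 1)) ℚ :=
  if j = 0 then 1 else if h : j ≤ s then X (Sum.inr ⟨j - 1, by omega⟩) else 0

/-- the extra variable `u`. -/
noncomputable def uu : MvPolynomial (Fin r ⊕ Fin (s + 1)) ℚ := X (Sum.inr (Fin.last s))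

/-- `ypm r s j = yp r s (j-1)` for `j ≥ 1` and `0` for `j = 0`. -/
noncomputable def ypm (j : ℕ) : MvPolynomial (Fin r ⊕ Fin (s + 1)) ℚ :=
  if j = 0 then 0 else yp r s (j - 1)

/-- `xxm r s i = xe r (s+1) (i-1)` for `i ≥ 1` and `0` for `i = 0`. -/
noncomputable def xxm (i : ℕ) : MvPolynomial (Fin r ⊕ Fin (s + 1)) ℚ :=
  if i = 0 then 0 else xe r (s + 1) (i - 1)

/-- The map `ℚ[x, y₁..y_{s+1}] → ℚ[x, y'₁..y'_s, u]`, `y_j ↦ y'_j + u y'_{j-1}`. -/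
noncomputable def phi1 : MvPolynomial (Fin r ⊕ Fin (s + 1)) ℚ →ₐ[ℚ]
    MvPolynomial (Fin r ⊕ Fin (s + 1)) ℚ :=
  aeval (Sum.elim (fun i => X (Sum.inl i))
    (fun j => yp r s ((j : ℕ) + 1) + uu r s * yp r s (j : ℕ)))

/-- The map `ℚ[x₁..x_{r+1}, y'] → ℚ[x₁..x_r, y', u]`, `x_i ↦ x_i + u x_{i-1}`. -/
noncomputable def phi2 : MvPolynomial (Fin (r + 1) ⊕ Fin s) ℚ →ₐ[ℚ]
    MvPolynomial (Fin r ⊕ Fin (s + 1)) ℚ :=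
  aeval (Sum.elim (fun i => xe r (s + 1) ((i : ℕ) + 1) + uu r s * xe r (s + 1) (i : ℕ))
    (fun j => X (Sum.inr (Fin.castSucc j))))

lemma xe_zero : xe r s 0 = 1 := by simp [xe]

lemma xe_of_le {i : ℕ} (h1 : 1 ≤ i) (h2 : i ≤ r) :
    xe r s i = X (Sum.inl ⟨i - 1, by omega⟩) := by
  unfold xe; rw [dif_neg (by omega), dif_pos h2]

lemma xe_of_gt {i : ℕ} (h : r < i) : xe r s i = 0 := by
  unfold xe; rw [dif_neg (by omega), dif_neg (by omega)]

lemma ye_zero : ye r s 0 = 1 := by simp [ye]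

lemma ye_of_le {j : ℕ} (h1 : 1 ≤ j) (h2 : j ≤ s) :
    ye r s j = X (Sum.inr ⟨j - 1, by omega⟩) := by
  unfold ye; rw [dif_neg (by omega), dif_pos h2]

lemma ye_of_gt {j : ℕ} (h : s < j) : ye r s j = 0 := by
  unfold ye; rw [dif_neg (by omega), dif_neg (by omega)]

lemma yp_zero : yp r s 0 = 1 := by simp [yp]

lemma yp_of_le {j : ℕ} (h1 : 1 ≤ j) (h2 : j ≤ s) :
    yp r s j = X (Sum.inr ⟨j - 1, by omega⟩) := by
  unfold yp; rw [if_neg (by omega), dif_pos h2]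

lemma yp_of_gt {j : ℕ} (h : s < j) : yp r s j = 0 := by
  unfold yp; rw [if_neg (by omega), dif_neg (by omega)]

lemma phi1_xe (i : ℕ) : phi1 r s (xe r (s + 1) i) = xe r (s + 1) i := by
  rcases Nat.eq_zero_or_pos i with h0 | h0
  · subst h0; rw [xe_zero, map_one]
  rcases le_or_gt i r with h1 | h1
  · rw [xe_of_le _ _ h0 h1, phi1, aeval_X, Sum.elim_inl]
  · rw [xe_of_gt _ _ h1, map_zero]

lemma phi1_ye (j : ℕ) :
    phi1 r s (ye r (s + 1) j) = yp r s j + uu r s * ypm r s j := by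
  rcases Nat.eq_zero_or_pos j with h0 | h0
  · subst h0; rw [ye_zero, map_one, yp_zero, ypm, if_pos rfl, mul_zero, add_zero]
  rcases le_or_gt j (s + 1) with h1 | h1
  · rw [ye_of_le _ _ h0 h1, phi1, aeval_X, Sum.elim_inr]
    have hv : ((⟨j - 1, by omega⟩ : Fin (s + 1)) : ℕ) = j - 1 := rfl
    rw [hv, show j - 1 + 1 = j by omega, ypm, if_neg (by omega)]
  · rw [ye_of_gt _ _ h1, map_zero, yp_of_gt _ _ (by omega), ypm, if_neg (by omega),
      yp_of_gt _ _ (by omega), mul_zero, add_zero]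

lemma phi2_xe (i : ℕ) :
    phi2 r s (xe (r + 1) s i) = xe r (s + 1) i + uu r s * xxm r s i := by
  rcases Nat.eq_zero_or_pos i with h0 | h0
  · subst h0; rw [xe_zero, map_one, xe_zero, xxm, if_pos rfl, mul_zero, add_zero]
  rcases le_or_gt i (r + 1) with h1 | h1
  · rw [xe_of_le _ _ h0 h1, phi2, aeval_X, Sum.elim_inl]
    have hv : ((⟨i - 1, by omega⟩ : Fin (r + 1)) : ℕ) = i - 1 := rfl
    rw [hv, show i - 1 + 1 = i by omega, xxm, if_neg (by omega)]
  · rw [xe_of_gt _ _ h1, map_zero, xe_of_gt _ _ (by omega), xxm, if_neg (by omega),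
      xe_of_gt _ _ (by omega), mul_zero, add_zero]

lemma phi2_ye (j : ℕ) : phi2 r s (ye (r + 1) s j) = yp r s j := by
  rcases Nat.eq_zero_or_pos j with h0 | h0
  · subst h0; rw [ye_zero, map_one, yp_zero]
  rcases le_or_gt j s with h1 | h1
  · rw [ye_of_le _ _ h0 h1, phi2, aeval_X, Sum.elim_inr, yp_of_le _ _ h0 h1]
    congr 1
  · rw [ye_of_gt _ _ h1, map_zero, yp_of_gt _ _ h1]

/-- the common image `Σ_{i+j=k} x_i y'_j` in the intermediate ring. -/
noncomputable def AA (k : ℕ) : MvPolynomial (Fin r ⊕ Fin (s + 1)) ℚ :=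
  ∑ i ∈ Finset.range (k + 1), xe r (s + 1) i * yp r s (k - i)

lemma glue (k : ℕ) (hk : 1 ≤ k) :
    phi1 r s (homComponent r (s + 1) k) = phi2 r s (homComponent (r + 1) s k) := by
  obtain ⟨k, rfl⟩ : ∃ m, k = m + 1 := ⟨k - 1, by omega⟩
  have lhs : phi1 r s (homComponent r (s + 1) (k + 1)) = AA r s (k + 1) + uu r s * AA r s k := by
    rw [homComponent, map_sum]
    have : ∀ i ∈ Finset.range (k + 1 + 1),
        phi1 r s (xe r (s + 1) i * ye r (s + 1) (k + 1 - i))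
          = xe r (s + 1) i * yp r s (k + 1 - i)
            + uu r s * (xe r (s + 1) i * ypm r s (k + 1 - i)) := by
      intro i _
      rw [map_mul, phi1_xe, phi1_ye]; ring
    rw [Finset.sum_congr rfl this, Finset.sum_add_distrib, ← Finset.mul_sum]
    refine congrArg₂ (· + ·) (by rw [AA]) ?_
    rw [AA]
    refine congrArg (uu r s * ·) ?_
    -- ∑ i ∈ range (k+2), xe i * ypm (k+1-i) = ∑ i ∈ range (k+1), xe i * yp (k-i)
    rw [Finset.sum_range_succ, show k + 1 - (k + 1) = 0 by omega, ypm, if_pos rfl, mul_zero,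
      add_zero]
    refine Finset.sum_congr rfl fun i hi => ?_
    have hi' := Finset.mem_range.1 hi
    rw [ypm, if_neg (by omega), show k + 1 - i - 1 = k - i by omega]
  have rhs : phi2 r s (homComponent (r + 1) s (k + 1)) = AA r s (k + 1) + uu r s * AA r s k := by
    rw [homComponent, map_sum]
    have : ∀ i ∈ Finset.range (k + 1 + 1),
        phi2 r s (xe (r + 1) s i * ye (r + 1) s (k + 1 - i))
          = xe r (s + 1) i * yp r s (k + 1 - i)
            + uu r s * (xxm r s i * yp r s (k + 1 - i)) := by
      intro i _
      rw [map_mul, phi2_xe, phi2_ye]; ring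
    rw [Finset.sum_congr rfl this, Finset.sum_add_distrib, ← Finset.mul_sum]
    refine congrArg₂ (· + ·) (by rw [AA]) ?_
    rw [AA]
    refine congrArg (uu r s * ·) ?_
    -- ∑ i ∈ range (k+2), xxm i * yp (k+1-i) = ∑ i ∈ range (k+1), xe i * yp (k-i)
    rw [Finset.sum_range_succ']
    rw [xxm, if_pos rfl, zero_mul, add_zero]
    refine Finset.sum_congr rfl fun i hi => ?_
    rw [xxm, if_neg (by omega), show i + 1 - 1 = i by omega, show k + 1 - (i + 1) = k - i by omega]
  rw [lhs, rhs]

end Step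
section ExistY

open MvPolynomial Finset

variable (r s : ℕ)

local notation "R₀" => MvPolynomial (Fin r ⊕ Fin (s + 1)) ℚ

lemma I1y : ∀ j, j ≤ s + 1 →
    yp r s j = ∑ a ∈ range (j + 1),
      phi1 r s ((-1 : R₀) ^ a * ye r (s + 1) (j - a)) * uu r s ^ a := by
  intro j
  induction j with
  | zero =>
    intro _
    rw [yp_zero, range_one, sum_singleton, pow_zero, one_mul, Nat.sub_zero, ye_zero,
      map_one, pow_zero, mul_one]
  | succ j ih =>
    intro hj
    have ihh := ih (by omega)
    have h1 : phi1 r s (ye r (s + 1) (j + 1)) = yp r s (j + 1) + uu r s * yp r s j := by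
      rw [phi1_ye, ypm, if_neg (Nat.succ_ne_zero j), Nat.add_sub_cancel]
    rw [Finset.sum_range_succ']
    have hterm : ∀ a ∈ range (j + 1),
        phi1 r s ((-1 : R₀) ^ (a + 1) * ye r (s + 1) (j + 1 - (a + 1))) * uu r s ^ (a + 1)
          = -(uu r s * (phi1 r s ((-1 : R₀) ^ a * ye r (s + 1) (j - a)) * uu r s ^ a)) := by
      intro a _
      rw [show j + 1 - (a + 1) = j - a by omega,
        show ((-1 : R₀) ^ (a + 1) * ye r (s + 1) (j - a))
          = (-1) * ((-1 : R₀) ^ a * ye r (s + 1) (j - a)) by ring,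
        map_mul, map_neg, map_one, pow_succ]
      ring
    rw [Finset.sum_congr rfl hterm, Finset.sum_neg_distrib, ← Finset.mul_sum, ← ihh,
      pow_zero, one_mul, Nat.sub_zero, pow_zero, mul_one, h1]
    ring

lemma I2y : uu r s ^ (s + 1) = ∑ a ∈ range (s + 1),
    phi1 r s ((-1 : R₀) ^ s * ((-1 : R₀) ^ a * ye r (s + 1) (s + 1 - a))) * uu r s ^ a := by
  have h0 := I1y r s (s + 1) le_rfl
  rw [yp_of_gt _ _ (by omega), Finset.sum_range_succ, Nat.sub_self, ye_zero, mul_one,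
    map_pow, map_neg, map_one, pow_succ] at h0
  have hstep : ∀ a ∈ range (s + 1),
      phi1 r s ((-1 : R₀) ^ s * ((-1 : R₀) ^ a * ye r (s + 1) (s + 1 - a))) * uu r s ^ a
        = (-1 : R₀) ^ s * (phi1 r s ((-1 : R₀) ^ a * ye r (s + 1) (s + 1 - a)) * uu r s ^ a) := by
    intro a _
    rw [map_mul, map_pow, map_neg, map_one]; ring
  rw [Finset.sum_congr rfl hstep, ← Finset.mul_sum]
  have hsum : (∑ a ∈ range (s + 1),
      phi1 r s ((-1 : R₀) ^ a * ye r (s + 1) (s + 1 - a)) * uu r s ^ a)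
        = (-1 : R₀) ^ s * uu r s ^ (s + 1) := by linear_combination -h0
  rw [hsum, ← mul_assoc, ← pow_add, Even.neg_one_pow ⟨s, rfl⟩, one_mul]

/-- representability in the power basis `1, u, …, u^s` over the image of `phi1`. -/
def Rep1 (z : R₀) : Prop :=
  ∃ c : ℕ → R₀, z = ∑ k ∈ range (s + 1), phi1 r s (c k) * uu r s ^ k

lemma rep1_single (w : R₀) {m : ℕ} (hm : m ≤ s) : Rep1 r s (phi1 r s w * uu r s ^ m) := by
  refine ⟨fun k => if k = m then w else 0, ?_⟩
  rw [Finset.sum_eq_single m]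
  · simp
  · intro k _ hk; simp only [if_neg hk, map_zero, zero_mul]
  · intro hm'; exact absurd (mem_range.2 (by omega)) hm'

lemma rep1_add {z w : R₀} (hz : Rep1 r s z) (hw : Rep1 r s w) : Rep1 r s (z + w) := by
  obtain ⟨c, rfl⟩ := hz; obtain ⟨c', rfl⟩ := hw
  exact ⟨fun k => c k + c' k, by
    rw [← Finset.sum_add_distrib]
    exact Finset.sum_congr rfl fun k _ => by rw [map_add]; ring⟩

lemma rep1_sum {α : Type*} (t : Finset α) (f : α → R₀) (h : ∀ a ∈ t, Rep1 r s (f a)) :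
    Rep1 r s (∑ a ∈ t, f a) := by
  classical
  induction t using Finset.induction_on with
  | empty => exact ⟨0, by simp⟩
  | insert _ _ hx ih =>
    rw [Finset.sum_insert hx]
    exact rep1_add r s (h _ (Finset.mem_insert_self _ _))
      (ih fun a ha => h a (Finset.mem_insert_of_mem ha))

lemma rep1_phi_mul (w : R₀) {z : R₀} (hz : Rep1 r s z) : Rep1 r s (phi1 r s w * z) := by
  obtain ⟨c, rfl⟩ := hz
  refine ⟨fun k => w * c k, ?_⟩
  rw [Finset.mul_sum]
  exact Finset.sum_congr rfl fun k _ => by rw [map_mul]; ring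

lemma rep1_umul {z : R₀} (hz : Rep1 r s z) : Rep1 r s (uu r s * z) := by
  obtain ⟨c, rfl⟩ := hz
  rw [Finset.mul_sum]
  have hterm : ∀ k ∈ range (s + 1),
      uu r s * (phi1 r s (c k) * uu r s ^ k) = phi1 r s (c k) * uu r s ^ (k + 1) := by
    intro k _; rw [pow_succ]; ring
  rw [Finset.sum_congr rfl hterm, Finset.sum_range_succ]
  apply rep1_add
  · -- ∑ k ∈ range s, phi1 (c k) * u^(k+1)
    refine ⟨fun k => if k = 0 then 0 else c (k - 1), ?_⟩
    rw [Finset.sum_range_succ']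
    simp
  · -- phi1 (c s) * u^(s+1)
    rw [I2y, Finset.mul_sum]
    refine ⟨fun a => c s * ((-1 : R₀) ^ s * ((-1 : R₀) ^ a * ye r (s + 1) (s + 1 - a))), ?_⟩
    exact Finset.sum_congr rfl fun a _ => by simp only [map_mul]; ring

lemma rep1_upow (m : ℕ) {z : R₀} (hz : Rep1 r s z) : Rep1 r s (uu r s ^ m * z) := by
  induction m with
  | zero => rw [pow_zero, one_mul]; exact hz
  | succ m ih =>
    rw [pow_succ, show uu r s ^ m * uu r s * z = uu r s * (uu r s ^ m * z) by ring]
    exact rep1_umul r s ih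

lemma rep1_mul {z w : R₀} (hz : Rep1 r s z) (hw : Rep1 r s w) : Rep1 r s (z * w) := by
  obtain ⟨c, rfl⟩ := hz
  rw [Finset.sum_mul]
  refine rep1_sum r s _ _ fun k _ => ?_
  rw [show phi1 r s (c k) * uu r s ^ k * w = phi1 r s (c k) * (uu r s ^ k * w) by ring]
  exact rep1_phi_mul r s _ (rep1_upow r s k hw)

lemma rep1_one : Rep1 r s 1 := by
  have := rep1_single r s 1 (Nat.zero_le s)
  rwa [map_one, pow_zero, mul_one] at this

lemma rep1_X (v : Fin r ⊕ Fin (s + 1)) : Rep1 r s (X v) := by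
  rcases v with i | j
  · have := rep1_single r s (X (Sum.inl i) : R₀) (Nat.zero_le s)
    rwa [phi1, aeval_X, Sum.elim_inl, pow_zero, mul_one] at this
  · rcases Nat.lt_or_ge (j : ℕ) s with hj | hj
    · have hy : (X (Sum.inr j) : R₀) = yp r s ((j : ℕ) + 1) := by
        have hfin : (⟨(j : ℕ) + 1 - 1, by omega⟩ : Fin (s + 1)) = j := Fin.ext (show (j : ℕ) + 1 - 1 = (j : ℕ) by omega)
        rw [yp_of_le _ _ (Nat.succ_pos _) (by omega), hfin]
      rw [hy, I1y r s ((j : ℕ) + 1) (by omega)]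
      refine rep1_sum r s _ _ fun a ha => ?_
      have ha' := Finset.mem_range.1 ha
      exact rep1_single r s _ (by omega)
    · have hj' : (j : ℕ) = s := by omega
      have hu : (X (Sum.inr j) : R₀) = uu r s * 1 := by
        rw [mul_one, uu]; congr 1; congr 1; exact Fin.ext hj'
      rw [hu]
      exact rep1_umul r s (rep1_one r s)

lemma rep1_all (z : R₀) : Rep1 r s z := by
  induction z using MvPolynomial.induction_on with
  | C q =>
    have := rep1_single r s (C q : R₀) (Nat.zero_le s)
    rwa [show phi1 r s (C q) = C q from by
        rw [show (C q : R₀) = algebraMap ℚ R₀ q from rfl]; exact AlgHom.commutes _ q,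
      pow_zero, mul_one] at this
  | add p q hp hq => exact rep1_add r s hp hq
  | mul_X p v hp => exact rep1_mul r s hp (rep1_X r s v)

end ExistY
section ExistX

open MvPolynomial Finset

variable (r s : ℕ)

local notation "R₀" => MvPolynomial (Fin r ⊕ Fin (s + 1)) ℚ
local notation "R₂" => MvPolynomial (Fin (r + 1) ⊕ Fin s) ℚ

lemma I1x : ∀ i, i ≤ r + 1 →
    xe r (s + 1) i = ∑ a ∈ range (i + 1),
      phi2 r s ((-1 : R₂) ^ a * xe (r + 1) s (i - a)) * uu r s ^ a := by
  intro i
  induction i with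
  | zero =>
    intro _
    rw [xe_zero, range_one, sum_singleton, pow_zero, one_mul, Nat.sub_zero, xe_zero,
      map_one, pow_zero, mul_one]
  | succ i ih =>
    intro hi
    have ihh := ih (by omega)
    have h1 : phi2 r s (xe (r + 1) s (i + 1))
        = xe r (s + 1) (i + 1) + uu r s * xe r (s + 1) i := by
      rw [phi2_xe, xxm, if_neg (Nat.succ_ne_zero i), Nat.add_sub_cancel]
    rw [Finset.sum_range_succ']
    have hterm : ∀ a ∈ range (i + 1),
        phi2 r s ((-1 : R₂) ^ (a + 1) * xe (r + 1) s (i + 1 - (a + 1))) * uu r s ^ (a + 1)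
          = -(uu r s * (phi2 r s ((-1 : R₂) ^ a * xe (r + 1) s (i - a)) * uu r s ^ a)) := by
      intro a _
      rw [show i + 1 - (a + 1) = i - a by omega,
        show ((-1 : R₂) ^ (a + 1) * xe (r + 1) s (i - a))
          = (-1) * ((-1 : R₂) ^ a * xe (r + 1) s (i - a)) by ring,
        map_mul, map_neg, map_one, pow_succ]
      ring
    rw [Finset.sum_congr rfl hterm, Finset.sum_neg_distrib, ← Finset.mul_sum, ← ihh,
      pow_zero, one_mul, Nat.sub_zero, pow_zero, mul_one, h1]
    ring

lemma I2x : uu r s ^ (r + 1) = ∑ a ∈ range (r + 1),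
    phi2 r s ((-1 : R₂) ^ r * ((-1 : R₂) ^ a * xe (r + 1) s (r + 1 - a))) * uu r s ^ a := by
  have h0 := I1x r s (r + 1) le_rfl
  rw [xe_of_gt _ _ (by omega), Finset.sum_range_succ, Nat.sub_self, xe_zero, mul_one,
    map_pow, map_neg, map_one, pow_succ] at h0
  have hstep : ∀ a ∈ range (r + 1),
      phi2 r s ((-1 : R₂) ^ r * ((-1 : R₂) ^ a * xe (r + 1) s (r + 1 - a))) * uu r s ^ a
        = (-1 : R₀) ^ r * (phi2 r s ((-1 : R₂) ^ a * xe (r + 1) s (r + 1 - a)) * uu r s ^ a) := by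
    intro a _
    rw [map_mul, map_pow, map_neg, map_one]; ring
  rw [Finset.sum_congr rfl hstep, ← Finset.mul_sum]
  have hsum : (∑ a ∈ range (r + 1),
      phi2 r s ((-1 : R₂) ^ a * xe (r + 1) s (r + 1 - a)) * uu r s ^ a)
        = (-1 : R₀) ^ r * uu r s ^ (r + 1) := by linear_combination -h0
  rw [hsum, ← mul_assoc, ← pow_add, Even.neg_one_pow ⟨r, rfl⟩, one_mul]

/-- representability in the power basis `1, u, …, u^r` over the image of `phi2`. -/
def Rep2 (z : R₀) : Prop :=
  ∃ c : ℕ → R₂, z = ∑ k ∈ range (r + 1), phi2 r s (c k) * uu r s ^ k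

lemma rep2_single (w : R₂) {m : ℕ} (hm : m ≤ r) : Rep2 r s (phi2 r s w * uu r s ^ m) := by
  refine ⟨fun k => if k = m then w else 0, ?_⟩
  rw [Finset.sum_eq_single m]
  · simp
  · intro k _ hk; simp only [if_neg hk, map_zero, zero_mul]
  · intro hm'; exact absurd (mem_range.2 (by omega)) hm'

lemma rep2_add {z w : R₀} (hz : Rep2 r s z) (hw : Rep2 r s w) : Rep2 r s (z + w) := by
  obtain ⟨c, rfl⟩ := hz; obtain ⟨c', rfl⟩ := hw
  exact ⟨fun k => c k + c' k, by
    rw [← Finset.sum_add_distrib]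
    exact Finset.sum_congr rfl fun k _ => by rw [map_add]; ring⟩

lemma rep2_sum {α : Type*} (t : Finset α) (f : α → R₀) (h : ∀ a ∈ t, Rep2 r s (f a)) :
    Rep2 r s (∑ a ∈ t, f a) := by
  classical
  induction t using Finset.induction_on with
  | empty => exact ⟨0, by simp⟩
  | insert _ _ hx ih =>
    rw [Finset.sum_insert hx]
    exact rep2_add r s (h _ (Finset.mem_insert_self _ _))
      (ih fun a ha => h a (Finset.mem_insert_of_mem ha))

lemma rep2_phi_mul (w : R₂) {z : R₀} (hz : Rep2 r s z) : Rep2 r s (phi2 r s w * z) := by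
  obtain ⟨c, rfl⟩ := hz
  refine ⟨fun k => w * c k, ?_⟩
  rw [Finset.mul_sum]
  exact Finset.sum_congr rfl fun k _ => by rw [map_mul]; ring

lemma rep2_umul {z : R₀} (hz : Rep2 r s z) : Rep2 r s (uu r s * z) := by
  obtain ⟨c, rfl⟩ := hz
  rw [Finset.mul_sum]
  have hterm : ∀ k ∈ range (r + 1),
      uu r s * (phi2 r s (c k) * uu r s ^ k) = phi2 r s (c k) * uu r s ^ (k + 1) := by
    intro k _; rw [pow_succ]; ring
  rw [Finset.sum_congr rfl hterm, Finset.sum_range_succ]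
  apply rep2_add
  · refine ⟨fun k => if k = 0 then 0 else c (k - 1), ?_⟩
    rw [Finset.sum_range_succ']
    simp
  · rw [I2x, Finset.mul_sum]
    refine ⟨fun a => c r * ((-1 : R₂) ^ r * ((-1 : R₂) ^ a * xe (r + 1) s (r + 1 - a))), ?_⟩
    exact Finset.sum_congr rfl fun a _ => by simp only [map_mul]; ring

lemma rep2_upow (m : ℕ) {z : R₀} (hz : Rep2 r s z) : Rep2 r s (uu r s ^ m * z) := by
  induction m with
  | zero => rw [pow_zero, one_mul]; exact hz
  | succ m ih =>
    rw [pow_succ, show uu r s ^ m * uu r s * z = uu r s * (uu r s ^ m * z) by ring]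
    exact rep2_umul r s ih

lemma rep2_mul {z w : R₀} (hz : Rep2 r s z) (hw : Rep2 r s w) : Rep2 r s (z * w) := by
  obtain ⟨c, rfl⟩ := hz
  rw [Finset.sum_mul]
  refine rep2_sum r s _ _ fun k _ => ?_
  rw [show phi2 r s (c k) * uu r s ^ k * w = phi2 r s (c k) * (uu r s ^ k * w) by ring]
  exact rep2_phi_mul r s _ (rep2_upow r s k hw)

lemma rep2_one : Rep2 r s 1 := by
  have := rep2_single r s 1 (Nat.zero_le r)
  rwa [map_one, pow_zero, mul_one] at this

lemma rep2_X (v : Fin r ⊕ Fin (s + 1)) : Rep2 r s (X v) := by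
  rcases v with i | j
  · have hx : (X (Sum.inl i) : R₀) = xe r (s + 1) ((i : ℕ) + 1) := by
      have hfin : (⟨(i : ℕ) + 1 - 1, by omega⟩ : Fin r) = i :=
        Fin.ext (show (i : ℕ) + 1 - 1 = (i : ℕ) by omega)
      rw [xe_of_le _ _ (Nat.succ_pos _) (by omega), hfin]
    rw [hx, I1x r s ((i : ℕ) + 1) (by omega)]
    refine rep2_sum r s _ _ fun a ha => ?_
    have ha' := Finset.mem_range.1 ha
    exact rep2_single r s _ (by omega)
  · rcases Nat.lt_or_ge (j : ℕ) s with hj | hj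
    · have hy : (X (Sum.inr j) : R₀) = yp r s ((j : ℕ) + 1) := by
        have hfin : (⟨(j : ℕ) + 1 - 1, by omega⟩ : Fin (s + 1)) = j :=
          Fin.ext (show (j : ℕ) + 1 - 1 = (j : ℕ) by omega)
        rw [yp_of_le _ _ (Nat.succ_pos _) (by omega), hfin]
      rw [hy, ← phi2_ye r s ((j : ℕ) + 1)]
      have := rep2_single r s (ye (r + 1) s ((j : ℕ) + 1)) (Nat.zero_le r)
      rwa [pow_zero, mul_one] at this
    · have hj' : (j : ℕ) = s := by omega
      have hu : (X (Sum.inr j) : R₀) = uu r s * 1 := by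
        rw [mul_one, uu]; congr 1; congr 1; exact Fin.ext hj'
      rw [hu]
      exact rep2_umul r s (rep2_one r s)

lemma rep2_all (z : R₀) : Rep2 r s z := by
  induction z using MvPolynomial.induction_on with
  | C q =>
    have := rep2_single r s (C q : R₂) (Nat.zero_le r)
    rwa [show phi2 r s (C q) = C q from by
        rw [show (C q : R₂) = algebraMap ℚ R₂ q from rfl]
        exact AlgHom.commutes _ q,
      pow_zero, mul_one] at this
  | add p q hp hq => exact rep2_add r s hp hq
  | mul_X p v hp => exact rep2_mul r s hp (rep2_X r s v)

end ExistX
section UniqY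

open MvPolynomial Finset

variable (r s : ℕ)

local notation "R₀" => MvPolynomial (Fin r ⊕ Fin (s + 1)) ℚ
local notation "Ay" => MvPolynomial (Fin r) ℚ

/-- the first `s` of the `inr`-variables, viewed as "roots". -/
noncomputable def wv : Fin s → MvPolynomial (Fin r ⊕ Fin (s + 1)) ℚ :=
  fun p => X (Sum.inr (Fin.castSucc p))

/-- all `s+1` of the `inr`-variables. -/
noncomputable def vfull : Fin (s + 1) → MvPolynomial (Fin r ⊕ Fin (s + 1)) ℚ :=
  fun p => X (Sum.inr p)

noncomputable def beta1 : MvPolynomial (Fin r ⊕ Fin (s + 1)) ℚ →ₐ[ℚ]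
    MvPolynomial (Fin r ⊕ Fin (s + 1)) ℚ :=
  aeval (Sum.elim (fun i => X (Sum.inl i))
    (fun j : Fin (s + 1) =>
      if (j : ℕ) < s then esymmAt (wv r s) ((j : ℕ) + 1) else uu r s))

lemma beta1_yp (m : ℕ) : beta1 r s (yp r s m) = esymmAt (wv r s) m := by
  rcases Nat.eq_zero_or_pos m with h0 | h0
  · subst h0; rw [yp_zero, map_one, esymmAt_zero]
  rcases le_or_gt m s with h1 | h1
  · rw [yp_of_le _ _ h0 h1, beta1, aeval_X, Sum.elim_inr, if_pos (show m - 1 < s by omega)]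
    rw [show m - 1 + 1 = m by omega]
  · rw [yp_of_gt _ _ h1, map_zero, esymmAt_of_lt _ h1]

lemma beta1_u : beta1 r s (uu r s) = uu r s := by
  rw [uu, beta1, aeval_X, Sum.elim_inr, if_neg (by simp)]
  rfl

noncomputable def psi1 : MvPolynomial (Fin r ⊕ Fin (s + 1)) ℚ →ₐ[ℚ]
    MvPolynomial (Fin r ⊕ Fin (s + 1)) ℚ :=
  (beta1 r s).comp (phi1 r s)

lemma psi1_Xl (i : Fin r) : psi1 r s (X (Sum.inl i)) = X (Sum.inl i) := by
  rw [psi1, AlgHom.comp_apply, phi1, aeval_X, Sum.elim_inl, beta1, aeval_X, Sum.elim_inl]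

lemma psi1_Xr (j : Fin (s + 1)) :
    psi1 r s (X (Sum.inr j)) = esymmAt (vfull r s) ((j : ℕ) + 1) := by
  rw [psi1, AlgHom.comp_apply, phi1, aeval_X, Sum.elim_inr, map_add, map_mul,
    beta1_yp, beta1_yp, beta1_u]
  have hsucc := esymmAt_succ (vfull r s) (j : ℕ)
  have hcast : (vfull r s) ∘ Fin.castSucc = wv r s := rfl
  have hlast : vfull r s (Fin.last s) = uu r s := rfl
  rw [hsucc, hcast, hlast]

lemma tau_psi1 (p : Fin (s + 1)) (z : MvPolynomial (Fin r ⊕ Fin (s + 1)) ℚ) :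
    rename (⇑(Equiv.swap (Sum.inr p : Fin r ⊕ Fin (s + 1)) (Sum.inr (Fin.last s))))
      (psi1 r s z) = psi1 r s z := by
  have : (rename (⇑(Equiv.swap (Sum.inr p : Fin r ⊕ Fin (s + 1))
      (Sum.inr (Fin.last s))))).comp (psi1 r s) = psi1 r s := by
    apply MvPolynomial.algHom_ext
    intro v
    rcases v with i | j
    · rw [AlgHom.comp_apply, psi1_Xl, rename_X,
        Equiv.swap_apply_of_ne_of_ne (by simp) (by simp)]
    · rw [AlgHom.comp_apply, psi1_Xr]
      have hfam : (fun i : Fin (s + 1) =>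
          rename (⇑(Equiv.swap (Sum.inr p : Fin r ⊕ Fin (s + 1)) (Sum.inr (Fin.last s))))
            (vfull r s i)) = (vfull r s) ∘ ⇑(Equiv.swap p (Fin.last s)) := by
        funext i
        rw [vfull, rename_X, Function.Injective.swap_apply Sum.inr_injective]
        rfl
      have step1 : (rename (⇑(Equiv.swap (Sum.inr p : Fin r ⊕ Fin (s + 1))
          (Sum.inr (Fin.last s))))) (esymmAt (vfull r s) ((j : ℕ) + 1))
          = aeval ((vfull r s) ∘ ⇑(Equiv.swap p (Fin.last s)))
              (esymm (Fin (s + 1)) ℚ ((j : ℕ) + 1)) := by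
        simp only [esymmAt]
        rw [comp_aeval_apply, hfam]
      rw [step1]
      exact esymmAt_perm _ _ _
  exact DFunLike.congr_fun this z

lemma roots_eq (c : ℕ → MvPolynomial (Fin r ⊕ Fin (s + 1)) ℚ)
    (h : ∑ k ∈ range (s + 1), phi1 r s (c k) * uu r s ^ k = 0) (p : Fin (s + 1)) :
    ∑ k ∈ range (s + 1), psi1 r s (c k) * (X (Sum.inr p) : R₀) ^ k = 0 := by
  have h1 : ∑ k ∈ range (s + 1), psi1 r s (c k) * uu r s ^ k = 0 := by
    have := congrArg (beta1 r s) h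
    rw [map_sum, map_zero] at this
    rw [← this]
    exact Finset.sum_congr rfl fun k _ => by
      rw [map_mul, map_pow, beta1_u]; rfl
  have h2 := congrArg
    (rename (⇑(Equiv.swap (Sum.inr p : Fin r ⊕ Fin (s + 1)) (Sum.inr (Fin.last s))))) h1
  rw [map_sum, map_zero] at h2
  rw [← h2]
  refine Finset.sum_congr rfl fun k _ => ?_
  rw [map_mul, map_pow, tau_psi1, uu, rename_X, Equiv.swap_apply_right]

/-- transporting the fundamental theorem of symmetric polynomials. -/
noncomputable def Theta : MvPolynomial (Fin r ⊕ Fin (s + 1)) ℚ ≃ₐ[ℚ]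
    MvPolynomial (Fin (s + 1)) (MvPolynomial (Fin r) ℚ) :=
  (renameEquiv ℚ (Equiv.sumComm (Fin r) (Fin (s + 1)))).trans
    (sumAlgEquiv ℚ (Fin (s + 1)) (Fin r))

lemma theta_Xl (i : Fin r) : Theta r s (X (Sum.inl i)) = C (X i) := by
  simp [Theta, sumToIter_Xr]

lemma theta_Xr (j : Fin (s + 1)) : Theta r s (X (Sum.inr j)) = X j := by
  simp [Theta, sumToIter_Xl]

noncomputable def FTy : MvPolynomial (Fin (s + 1)) (MvPolynomial (Fin r) ℚ) →ₐ[MvPolynomial (Fin r) ℚ]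
    MvPolynomial (Fin (s + 1)) (MvPolynomial (Fin r) ℚ) :=
  aeval (fun i : Fin (s + 1) => esymm (Fin (s + 1)) (MvPolynomial (Fin r) ℚ) ((i : ℕ) + 1))

lemma FTy_inj : Function.Injective (FTy r s) := by
  have h1 : Function.Injective (esymmAlgHom (Fin (s + 1)) (MvPolynomial (Fin r) ℚ) (s + 1)) :=
    esymmAlgHom_injective _ (by simp)
  intro z w h
  apply h1
  apply Subtype.ext
  rw [esymmAlgHom_apply, esymmAlgHom_apply]
  exact h

lemma theta_psi1 (z : MvPolynomial (Fin r ⊕ Fin (s + 1)) ℚ) :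
    Theta r s (psi1 r s z) = FTy r s (Theta r s z) := by
  have key : ((Theta r s).toAlgHom.comp (psi1 r s))
      = ((FTy r s).restrictScalars ℚ).comp (Theta r s).toAlgHom := by
    apply MvPolynomial.algHom_ext
    intro v
    rcases v with i | j
    · rw [AlgHom.comp_apply, AlgHom.comp_apply, psi1_Xl,
        AlgEquiv.toAlgHom_eq_coe, AlgEquiv.coe_toAlgHom, theta_Xl]
      exact (show FTy r s (C (X i)) = C (X i) from by rw [FTy, aeval_C]; rfl).symm
    · rw [AlgHom.comp_apply, AlgHom.comp_apply, psi1_Xr,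
        AlgEquiv.toAlgHom_eq_coe, AlgEquiv.coe_toAlgHom, theta_Xr]
      show Theta r s (esymmAt (vfull r s) ((j : ℕ) + 1)) = FTy r s (X j)
      rw [FTy, aeval_X]
      have hfam : (fun i : Fin (s + 1) => Theta r s (vfull r s i))
          = (X : Fin (s + 1) → MvPolynomial (Fin (s + 1)) (MvPolynomial (Fin r) ℚ)) := by
        funext i; rw [vfull, theta_Xr]
      simp only [esymmAt]
      have step1 : (Theta r s) ((aeval (vfull r s)) (esymm (Fin (s + 1)) ℚ ((j : ℕ) + 1)))
          = aeval (fun i => Theta r s (vfull r s i)) (esymm (Fin (s + 1)) ℚ ((j : ℕ) + 1)) :=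
        comp_aeval_apply (f := vfull r s)
          (φ := (Theta r s : MvPolynomial (Fin r ⊕ Fin (s + 1)) ℚ →ₐ[ℚ]
            MvPolynomial (Fin (s + 1)) (MvPolynomial (Fin r) ℚ))) _
      rw [step1, hfam, aeval_esymm_eq_multiset_esymm, esymm_eq_multiset_esymm]
  exact congrFun (congrArg DFunLike.coe key) z

lemma psi1_inj : Function.Injective (psi1 r s) := by
  intro z w h
  have := congrArg (Theta r s) h
  rw [theta_psi1, theta_psi1] at this
  exact (Theta r s).injective (FTy_inj r s this)

lemma hli1 (c : ℕ → MvPolynomial (Fin r ⊕ Fin (s + 1)) ℚ)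
    (h : ∑ k ∈ range (s + 1), phi1 r s (c k) * uu r s ^ k = 0) :
    ∀ k ∈ range (s + 1), c k = 0 := by
  have hroots := roots_eq r s c h
  have hvinj : Function.Injective (fun p : Fin (s + 1) => (X (Sum.inr p) : R₀)) :=
    fun p q hpq => Sum.inr_injective (X_injective hpq)
  have hzero := coeffs_eq_zero_of_roots _ hvinj (fun k => psi1 r s (c k)) hroots
  intro k hk
  apply psi1_inj r s
  rw [map_zero]
  exact hzero k hk

end UniqY
section UniqX

open MvPolynomial Finset

variable (r s : ℕ)

local notation "R₀" => MvPolynomial (Fin r ⊕ Fin (s + 1)) ℚ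
local notation "R₂" => MvPolynomial (Fin (r + 1) ⊕ Fin s) ℚ

noncomputable def xv : Fin r → MvPolynomial (Fin r ⊕ Fin (s + 1)) ℚ :=
  fun p => X (Sum.inl p)

/-- the index of the `p`-th element of the extended x-block `x₁, …, x_r, u`. -/
def idx (p : Fin (r + 1)) : Fin r ⊕ Fin (s + 1) :=
  if h : (p : ℕ) < r then Sum.inl ⟨p, h⟩ else Sum.inr (Fin.last s)

noncomputable def xvu : Fin (r + 1) → MvPolynomial (Fin r ⊕ Fin (s + 1)) ℚ :=
  fun p => X (idx r s p)

lemma idx_inj : Function.Injective (idx r s) := by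
  intro p q h
  unfold idx at h
  split at h <;> split at h <;> simp_all [Sum.inl.injEq, Fin.ext_iff] <;> omega

lemma xvu_castSucc : (xvu r s) ∘ Fin.castSucc = xv r s := by
  funext p
  simp only [Function.comp_apply, xvu, xv, idx]
  rw [dif_pos (show ((Fin.castSucc p : Fin (r + 1)) : ℕ) < r from p.isLt)]
  congr 1

lemma xvu_last : xvu r s (Fin.last r) = uu r s := by
  simp only [xvu, idx, uu]
  rw [dif_neg (by simp)]

noncomputable def beta2 : MvPolynomial (Fin r ⊕ Fin (s + 1)) ℚ →ₐ[ℚ]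
    MvPolynomial (Fin r ⊕ Fin (s + 1)) ℚ :=
  aeval (Sum.elim (fun i : Fin r => esymmAt (xv r s) ((i : ℕ) + 1))
    (fun j : Fin (s + 1) => X (Sum.inr j)))

lemma beta2_xe (m : ℕ) : beta2 r s (xe r (s + 1) m) = esymmAt (xv r s) m := by
  rcases Nat.eq_zero_or_pos m with h0 | h0
  · subst h0; rw [xe_zero, map_one, esymmAt_zero]
  rcases le_or_gt m r with h1 | h1
  · rw [xe_of_le _ _ h0 h1, beta2, aeval_X, Sum.elim_inl, show m - 1 + 1 = m by omega]
  · rw [xe_of_gt _ _ h1, map_zero, esymmAt_of_lt _ h1]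

lemma beta2_u : beta2 r s (uu r s) = uu r s := by
  rw [uu, beta2, aeval_X, Sum.elim_inr]

lemma beta2_yp (m : ℕ) : beta2 r s (yp r s m) = yp r s m := by
  rcases Nat.eq_zero_or_pos m with h0 | h0
  · subst h0; rw [yp_zero, map_one]
  rcases le_or_gt m s with h1 | h1
  · rw [yp_of_le _ _ h0 h1, beta2, aeval_X, Sum.elim_inr]
  · rw [yp_of_gt _ _ h1, map_zero]

noncomputable def psi2 : MvPolynomial (Fin (r + 1) ⊕ Fin s) ℚ →ₐ[ℚ]
    MvPolynomial (Fin r ⊕ Fin (s + 1)) ℚ :=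
  (beta2 r s).comp (phi2 r s)

lemma psi2_Xl (i : Fin (r + 1)) :
    psi2 r s (X (Sum.inl i)) = esymmAt (xvu r s) ((i : ℕ) + 1) := by
  rw [psi2, AlgHom.comp_apply, phi2, aeval_X, Sum.elim_inl, map_add, map_mul,
    beta2_xe, beta2_xe, beta2_u]
  rw [esymmAt_succ (xvu r s) (i : ℕ), xvu_castSucc, xvu_last]

lemma psi2_Xr (j : Fin s) :
    psi2 r s (X (Sum.inr j)) = X (Sum.inr (Fin.castSucc j)) := by
  rw [psi2, AlgHom.comp_apply, phi2, aeval_X, Sum.elim_inr, beta2, aeval_X, Sum.elim_inr]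

lemma tau_psi2 (p : Fin (r + 1)) (z : MvPolynomial (Fin (r + 1) ⊕ Fin s) ℚ) :
    rename (⇑(Equiv.swap (idx r s p) (Sum.inr (Fin.last s))))
      (psi2 r s z) = psi2 r s z := by
  have key : (rename (⇑(Equiv.swap (idx r s p)
      (Sum.inr (Fin.last s))))).comp (psi2 r s) = psi2 r s := by
    apply MvPolynomial.algHom_ext
    intro v
    rcases v with i | j
    · rw [AlgHom.comp_apply, psi2_Xl]
      have hfam : (fun q : Fin (r + 1) =>
          rename (⇑(Equiv.swap (idx r s p) (Sum.inr (Fin.last s))))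
            (xvu r s q)) = (xvu r s) ∘ ⇑(Equiv.swap p (Fin.last r)) := by
        funext q
        rw [xvu, rename_X]
        rw [show (Sum.inr (Fin.last s) : Fin r ⊕ Fin (s + 1)) = idx r s (Fin.last r) from by
          rw [idx, dif_neg (by simp)]]
        rw [Function.Injective.swap_apply (idx_inj r s)]
        rfl
      have step1 : (rename (⇑(Equiv.swap (idx r s p) (Sum.inr (Fin.last s)))))
          (esymmAt (xvu r s) ((i : ℕ) + 1))
          = aeval ((xvu r s) ∘ ⇑(Equiv.swap p (Fin.last r)))
              (esymm (Fin (r + 1)) ℚ ((i : ℕ) + 1)) := by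
        simp only [esymmAt]
        rw [comp_aeval_apply, hfam]
      rw [step1]
      exact esymmAt_perm _ _ _
    · rw [AlgHom.comp_apply, psi2_Xr, rename_X]
      congr 1
      apply Equiv.swap_apply_of_ne_of_ne
      · unfold idx; split
        · simp
        · simp only [ne_eq, Sum.inr.injEq]
          intro h
          have := congrArg Fin.val h
          simp [Fin.last] at this
          omega
      · simp only [ne_eq, Sum.inr.injEq]
        intro h
        have := congrArg Fin.val h
        simp [Fin.last] at this
        omega
  exact DFunLike.congr_fun key z

lemma roots_eq2 (c : ℕ → MvPolynomial (Fin (r + 1) ⊕ Fin s) ℚ)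
    (h : ∑ k ∈ range (r + 1), phi2 r s (c k) * uu r s ^ k = 0) (p : Fin (r + 1)) :
    ∑ k ∈ range (r + 1), psi2 r s (c k) * (xvu r s p) ^ k = 0 := by
  have h1 : ∑ k ∈ range (r + 1), psi2 r s (c k) * uu r s ^ k = 0 := by
    have := congrArg (beta2 r s) h
    rw [map_sum, map_zero] at this
    rw [← this]
    exact Finset.sum_congr rfl fun k _ => by
      rw [map_mul, map_pow, beta2_u]; rfl
  have h2 := congrArg (rename (⇑(Equiv.swap (idx r s p) (Sum.inr (Fin.last s))))) h1
  rw [map_sum, map_zero] at h2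
  rw [← h2]
  refine Finset.sum_congr rfl fun k _ => ?_
  rw [map_mul, map_pow, tau_psi2, uu, rename_X, Equiv.swap_apply_right]
  rfl

/-- regrouping indices: `u` joins the `x`-block. -/
def Eidx : (Fin r ⊕ Fin (s + 1)) ≃ (Fin (r + 1) ⊕ Fin s) where
  toFun := Sum.elim (fun i => Sum.inl (Fin.castSucc i))
    (fun j : Fin (s + 1) =>
      if h : (j : ℕ) < s then Sum.inr ⟨j, h⟩ else Sum.inl (Fin.last r))
  invFun := Sum.elim
    (fun i : Fin (r + 1) =>
      if h : (i : ℕ) < r then Sum.inl ⟨i, h⟩ else Sum.inr (Fin.last s))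
    (fun j => Sum.inr (Fin.castSucc j))
  left_inv := by
    rintro (i | j)
    · rw [Sum.elim_inl, Sum.elim_inl, dif_pos (show ((Fin.castSucc i : Fin (r + 1)) : ℕ) < r
        from i.isLt)]
      congr 1
    · rcases Nat.lt_or_ge (j : ℕ) s with hj | hj
      · rw [Sum.elim_inr, dif_pos hj, Sum.elim_inr]
        congr 1
      · rw [Sum.elim_inr, dif_neg (by omega), Sum.elim_inl, dif_neg (by simp)]
        congr 1
        have hj2 : (j : ℕ) = s := by have := j.isLt; omega
        exact Fin.ext (by rw [Fin.val_last, hj2])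
  right_inv := by
    rintro (i | j)
    · rcases Nat.lt_or_ge (i : ℕ) r with hi | hi
      · rw [Sum.elim_inl, dif_pos hi, Sum.elim_inl]
        congr 1
      · rw [Sum.elim_inl, dif_neg (by omega), Sum.elim_inr, dif_neg (by simp)]
        congr 1
        have hi2 : (i : ℕ) = r := by have := i.isLt; omega
        exact Fin.ext (by rw [Fin.val_last, hi2])
    · rw [Sum.elim_inr, Sum.elim_inr,
        dif_pos (show ((Fin.castSucc j : Fin (s + 1)) : ℕ) < s from j.isLt)]
      congr 1

noncomputable def Theta2 : MvPolynomial (Fin (r + 1) ⊕ Fin s) ℚ ≃ₐ[ℚ]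
    MvPolynomial (Fin (r + 1)) (MvPolynomial (Fin s) ℚ) :=
  sumAlgEquiv ℚ (Fin (r + 1)) (Fin s)

noncomputable def Theta2' : MvPolynomial (Fin r ⊕ Fin (s + 1)) ℚ ≃ₐ[ℚ]
    MvPolynomial (Fin (r + 1)) (MvPolynomial (Fin s) ℚ) :=
  (renameEquiv ℚ (Eidx r s)).trans (sumAlgEquiv ℚ (Fin (r + 1)) (Fin s))

lemma theta2_Xl (i : Fin (r + 1)) : Theta2 r s (X (Sum.inl i)) = X i := by
  simp [Theta2, sumToIter_Xl]

lemma theta2_Xr (j : Fin s) : Theta2 r s (X (Sum.inr j)) = C (X j) := by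
  simp [Theta2, sumToIter_Xr]

lemma Eidx_idx (q : Fin (r + 1)) : Eidx r s (idx r s q) = Sum.inl q := by
  rcases Nat.lt_or_ge (q : ℕ) r with hq | hq
  · rw [idx, dif_pos hq]
    simp only [Eidx, Equiv.coe_fn_mk, Sum.elim_inl]
    congr 1
  · rw [idx, dif_neg (by omega)]
    simp only [Eidx, Equiv.coe_fn_mk, Sum.elim_inr]
    rw [dif_neg (by simp)]
    congr 1
    have hq2 : (q : ℕ) = r := by have := q.isLt; omega
    exact Fin.ext (by rw [Fin.val_last, hq2])

lemma Eidx_castSucc (j : Fin s) :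
    Eidx r s (Sum.inr (Fin.castSucc j)) = Sum.inr j := by
  simp only [Eidx, Equiv.coe_fn_mk, Sum.elim_inr]
  rw [dif_pos (show ((Fin.castSucc j : Fin (s + 1)) : ℕ) < s from j.isLt)]
  congr 1

lemma theta2'_xvu (q : Fin (r + 1)) : Theta2' r s (xvu r s q) = X q := by
  simp only [Theta2', xvu, AlgEquiv.trans_apply, renameEquiv_apply, rename_X, Eidx_idx]
  simp [sumToIter_Xl]

lemma theta2'_Xr (j : Fin s) :
    Theta2' r s (X (Sum.inr (Fin.castSucc j))) = C (X j) := by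
  simp only [Theta2', AlgEquiv.trans_apply, renameEquiv_apply, rename_X, Eidx_castSucc]
  simp [sumToIter_Xr]

noncomputable def FTx : MvPolynomial (Fin (r + 1)) (MvPolynomial (Fin s) ℚ)
    →ₐ[MvPolynomial (Fin s) ℚ] MvPolynomial (Fin (r + 1)) (MvPolynomial (Fin s) ℚ) :=
  aeval (fun i : Fin (r + 1) => esymm (Fin (r + 1)) (MvPolynomial (Fin s) ℚ) ((i : ℕ) + 1))

lemma FTx_inj : Function.Injective (FTx r s) := by
  have h1 : Function.Injective (esymmAlgHom (Fin (r + 1)) (MvPolynomial (Fin s) ℚ) (r + 1)) :=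
    esymmAlgHom_injective _ (by simp)
  intro z w h
  apply h1
  apply Subtype.ext
  rw [esymmAlgHom_apply, esymmAlgHom_apply]
  exact h

lemma theta_psi2 (z : MvPolynomial (Fin (r + 1) ⊕ Fin s) ℚ) :
    Theta2' r s (psi2 r s z) = FTx r s (Theta2 r s z) := by
  have key : ((Theta2' r s).toAlgHom.comp (psi2 r s))
      = ((FTx r s).restrictScalars ℚ).comp (Theta2 r s).toAlgHom := by
    apply MvPolynomial.algHom_ext
    intro v
    rcases v with i | j
    · rw [AlgHom.comp_apply, AlgHom.comp_apply, psi2_Xl]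
      simp only [AlgEquiv.coe_toAlgHom]
      rw [theta2_Xl]
      show Theta2' r s (esymmAt (xvu r s) ((i : ℕ) + 1)) = FTx r s (X i)
      rw [FTx, aeval_X]
      have hfam : (fun q : Fin (r + 1) => Theta2' r s (xvu r s q))
          = (X : Fin (r + 1) → MvPolynomial (Fin (r + 1)) (MvPolynomial (Fin s) ℚ)) := by
        funext q; rw [theta2'_xvu]
      simp only [esymmAt]
      have step1 : (Theta2' r s) ((aeval (xvu r s)) (esymm (Fin (r + 1)) ℚ ((i : ℕ) + 1)))
          = aeval (fun q => Theta2' r s (xvu r s q)) (esymm (Fin (r + 1)) ℚ ((i : ℕ) + 1)) :=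
        comp_aeval_apply (f := xvu r s)
          (φ := (Theta2' r s : MvPolynomial (Fin r ⊕ Fin (s + 1)) ℚ →ₐ[ℚ]
            MvPolynomial (Fin (r + 1)) (MvPolynomial (Fin s) ℚ))) _
      rw [step1, hfam, aeval_esymm_eq_multiset_esymm, esymm_eq_multiset_esymm]
    · rw [AlgHom.comp_apply, AlgHom.comp_apply, psi2_Xr]
      simp only [AlgEquiv.coe_toAlgHom]
      rw [theta2_Xr, theta2'_Xr]
      exact (show FTx r s (C (X j)) = C (X j) from by rw [FTx, aeval_C]; rfl).symm
  exact DFunLike.congr_fun key z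

lemma psi2_inj : Function.Injective (psi2 r s) := by
  intro z w h
  have := congrArg (Theta2' r s) h
  rw [theta_psi2, theta_psi2] at this
  exact (Theta2 r s).injective (FTx_inj r s this)

lemma xvu_inj : Function.Injective (xvu r s) :=
  fun p q h => idx_inj r s (X_injective h)

lemma hli2 (c : ℕ → MvPolynomial (Fin (r + 1) ⊕ Fin s) ℚ)
    (h : ∑ k ∈ range (r + 1), phi2 r s (c k) * uu r s ^ k = 0) :
    ∀ k ∈ range (r + 1), c k = 0 := by
  have hroots := roots_eq2 r s c h
  have hzero := coeffs_eq_zero_of_roots _ (xvu_inj r s) (fun k => psi2 r s (c k)) hroots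
  intro k hk
  apply psi2_inj r s
  rw [map_zero]
  exact hzero k hk

end UniqX
section Assemble

open MvPolynomial Finset

lemma homComponent_s0 (r m : ℕ) (hm : 1 ≤ m) : homComponent r 0 m = xe r 0 m := by
  rw [homComponent, Finset.sum_range_succ, Nat.sub_self, ye_zero, mul_one]
  rw [Finset.sum_eq_zero fun i hi => by
    rw [ye_of_gt _ _ (show (0 : ℕ) < m - i by
      have := Finset.mem_range.1 hi; omega), mul_zero], zero_add]

lemma base_case (r : ℕ) :
    IsRegularSeqAux (MvPolynomial (Fin r ⊕ Fin 0) ℚ) ⊥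
      (List.ofFn fun k : Fin (r + 0) => homComponent r 0 ((k : ℕ) + 1)) := by
  have hlist : (List.ofFn fun k : Fin (r + 0) => homComponent r 0 ((k : ℕ) + 1))
      = List.map X (List.ofFn fun k : Fin (r + 0) =>
          (Sum.inl ⟨(k : ℕ), by omega⟩ : Fin r ⊕ Fin 0)) := by
    rw [List.map_ofFn]
    apply congrArg
    funext k
    rw [Function.comp_apply, homComponent_s0 r _ (Nat.succ_pos _),
      xe_of_le _ _ (Nat.succ_pos _) (by omega)]
    congr 1
  rw [hlist, show (⊥ : Ideal (MvPolynomial (Fin r ⊕ Fin 0) ℚ))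
      = Ideal.span (X '' (∅ : Set (Fin r ⊕ Fin 0))) from by
    rw [Set.image_empty, Ideal.span_empty]]
  apply regSeqAux_vars
  · intro i _ h; exact h
  · rw [List.nodup_ofFn]
    intro a b hab
    simp only [Sum.inl.injEq] at hab
    have : (a : ℕ) = (b : ℕ) := congrArg Fin.val hab
    exact Fin.ext this

lemma step_case (r s : ℕ)
    (IH : IsRegularSeqAux (MvPolynomial (Fin (r + 1) ⊕ Fin s) ℚ) ⊥
      (List.ofFn fun k : Fin ((r + 1) + s) => homComponent (r + 1) s ((k : ℕ) + 1))) :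
    IsRegularSeqAux (MvPolynomial (Fin r ⊕ Fin (s + 1)) ℚ) ⊥
      (List.ofFn fun k : Fin (r + (s + 1)) => homComponent r (s + 1) ((k : ℕ) + 1)) := by
  -- push forward along phi2
  have hup := (regSeqAux_map_iff (phi2 r s).toRingHom (r + 1) (fun k => uu r s ^ k)
    (fun z => rep2_all r s z) (fun c h => hli2 r s c h) (pow_zero _) (Nat.succ_pos r)
    (List.ofFn fun k : Fin ((r + 1) + s) => homComponent (r + 1) s ((k : ℕ) + 1)) ⊥).1 IH
  rw [Ideal.map_bot] at hup
  -- identify the two image lists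
  have hglue : List.map (⇑(phi2 r s).toRingHom)
      (List.ofFn fun k : Fin ((r + 1) + s) => homComponent (r + 1) s ((k : ℕ) + 1))
      = List.map (⇑(phi1 r s).toRingHom)
        (List.ofFn fun k : Fin (r + (s + 1)) => homComponent r (s + 1) ((k : ℕ) + 1)) := by
    rw [List.map_ofFn, List.map_ofFn]
    apply List.ext_getElem (by simp; omega)
    intro n h1 h2
    rw [List.getElem_ofFn, List.getElem_ofFn]
    simp only [Function.comp_apply]
    exact (glue r s (n + 1) (Nat.succ_pos n)).symm
  rw [hglue] at hup
  -- descend along phi1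
  have hdown := (regSeqAux_map_iff (phi1 r s).toRingHom (s + 1) (fun k => uu r s ^ k)
    (fun z => rep1_all r s z) (fun c h => hli1 r s c h) (pow_zero _) (Nat.succ_pos s)
    (List.ofFn fun k : Fin (r + (s + 1)) => homComponent r (s + 1) ((k : ℕ) + 1)) ⊥).2
  rw [Ideal.map_bot] at hdown
  exact hdown hup

lemma main_aux : ∀ (s r : ℕ),
    IsRegularSeqAux (MvPolynomial (Fin r ⊕ Fin s) ℚ) ⊥
      (List.ofFn fun k : Fin (r + s) => homComponent r s ((k : ℕ) + 1))
  | 0, r => base_case r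
  | (s + 1), r => step_case r s (main_aux s (r + 1))

end Assemble

/-- In `ℚ[x₁,…,x_r,y₁,…,y_s]` with `deg xᵢ = deg yᵢ = 2i`, the homogeneous
components (in each positive degree `2k`, `k = 1, …, r+s`) of
`(1 + x₁ + ⋯ + x_r)(1 + y₁ + ⋯ + y_s) − 1` form a regular sequence. -/
theorem homComponents_regular (r s : ℕ) :
    IsRegularSequence (MvPolynomial (Fin r ⊕ Fin s) ℚ)
      (List.ofFn fun k : Fin (r + s) => homComponent r s ((k : ℕ) + 1)) := by
  exact main_aux s r
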